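/- arXiv:2104.13098 — 3 statements merged into one kernel-verified Lean document; each statement's English description precedes it below -/
import Mathlib

section
/- Let k and ℓ be integers with 1 ≤ k ≤ ℓ, let m_1, …, m_ℓ be nonnegative real numbers, and let o_1, …, o_{ℓ−1} be real numbers. Assume: (a) for every j with 1 ≤ j ≤ k, m_1 + ⋯ + m_j ≥ o_1 + ⋯ + o_{j−1}; (b) for every i with 1 ≤ i ≤ ℓ−k+1, m_i + m_{i+1} + ⋯ + m_{i+k−1} ≥ o_i + o_{i+1} + ⋯ + o_{i+k−2}; and (c) for every i with ℓ−k+2 ≤ i ≤ ℓ, m_i + m_{i+1} + ⋯ + m_ℓ ≥ o_i + o_{i+1} + ⋯ + o_{ℓ−1}. Then k·(m_1 + ⋯ + m_ℓ) ≥ (k−1)·(o_1 + ⋯ + o_{ℓ−1}). -/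
open Finset

/-- Interchange a double sum over nested index sets into a sum weighted by
multiplicities. -/
lemma swap_sum_aux (N : ℕ) (f : ℕ → ℝ) (A : Finset ℕ) (B : ℕ → Finset ℕ)
    (hB : ∀ j ∈ A, B j ⊆ Icc 1 N) :
    ∑ j ∈ A, ∑ t ∈ B j, f t
      = ∑ t ∈ Icc 1 N, ((A.filter (fun j => t ∈ B j)).card : ℝ) * f t := by
  have h1 : ∑ j ∈ A, ∑ t ∈ B j, f t
      = ∑ j ∈ A, ∑ t ∈ Icc 1 N, if t ∈ B j then f t else 0 := by
    refine Finset.sum_congr rfl fun j hj => ?_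
    rw [Finset.sum_ite_mem, Finset.inter_eq_right.mpr (hB j hj)]
  rw [h1, Finset.sum_comm]
  refine Finset.sum_congr rfl fun t ht => ?_
  rw [← Finset.sum_filter, Finset.sum_const, nsmul_eq_mul]

/-- Summation inequality used for weight-augmenting path analysis on path components:
from the three families of `k`-window inequalities (prefix, sliding, suffix) one gets
`k·(m_1 + ⋯ + m_ℓ) ≥ (k-1)·(o_1 + ⋯ + o_{ℓ-1})`. -/
theorem window_ineq_path (k ℓ : ℕ) (hk : 1 ≤ k) (hkl : k ≤ ℓ)
    (m o : ℕ → ℝ) (hm : ∀ i, 1 ≤ i → i ≤ ℓ → 0 ≤ m i)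
    (ha : ∀ j, 1 ≤ j → j ≤ k →
      ∑ i ∈ Icc 1 (j - 1), o i ≤ ∑ i ∈ Icc 1 j, m i)
    (hb : ∀ i, 1 ≤ i → i ≤ ℓ - k + 1 →
      ∑ t ∈ Icc i (i + k - 2), o t ≤ ∑ t ∈ Icc i (i + k - 1), m t)
    (hc : ∀ i, ℓ - k + 2 ≤ i → i ≤ ℓ →
      ∑ t ∈ Icc i (ℓ - 1), o t ≤ ∑ t ∈ Icc i ℓ, m t) :
    ((k : ℝ) - 1) * ∑ i ∈ Icc 1 (ℓ - 1), o i ≤ (k : ℝ) * ∑ i ∈ Icc 1 ℓ, m i := by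
  -- identity for o : total multiplicity of each o t is k - 1
  have ho : ((k : ℝ) - 1) * ∑ i ∈ Icc 1 (ℓ - 1), o i
      = (∑ j ∈ Icc 1 (k - 1), ∑ t ∈ Icc 1 (j - 1), o t)
        + (∑ i ∈ Icc 1 (ℓ - k + 1), ∑ t ∈ Icc i (i + k - 2), o t)
        + (∑ i ∈ Icc (ℓ - k + 2) ℓ, ∑ t ∈ Icc i (ℓ - 1), o t) := by
    rw [swap_sum_aux (ℓ - 1) o (Icc 1 (k - 1)) (fun j => Icc 1 (j - 1))
        (fun j hj => by
          rw [Finset.mem_Icc] at hj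
          exact Finset.Icc_subset_Icc le_rfl (by omega)),
      swap_sum_aux (ℓ - 1) o (Icc 1 (ℓ - k + 1)) (fun i => Icc i (i + k - 2))
        (fun i hi => by
          rw [Finset.mem_Icc] at hi
          exact Finset.Icc_subset_Icc (by omega) (by omega)),
      swap_sum_aux (ℓ - 1) o (Icc (ℓ - k + 2) ℓ) (fun i => Icc i (ℓ - 1))
        (fun i hi => by
          rw [Finset.mem_Icc] at hi
          exact Finset.Icc_subset_Icc (by omega) le_rfl),
      ← Finset.sum_add_distrib, ← Finset.sum_add_distrib, Finset.mul_sum]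
    refine Finset.sum_congr rfl fun t ht => ?_
    rw [Finset.mem_Icc] at ht
    have e1 : (Icc 1 (k - 1)).filter (fun j => t ∈ Icc 1 (j - 1))
        = Icc (t + 1) (k - 1) := by
      ext j; simp only [Finset.mem_filter, Finset.mem_Icc]; omega
    have e2 : (Icc 1 (ℓ - k + 1)).filter (fun i => t ∈ Icc i (i + k - 2))
        = Icc (max 1 (t + 2 - k)) (min t (ℓ - k + 1)) := by
      ext i; simp only [Finset.mem_filter, Finset.mem_Icc]; omega
    have e3 : (Icc (ℓ - k + 2) ℓ).filter (fun i => t ∈ Icc i (ℓ - 1))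
        = Icc (ℓ - k + 2) t := by
      ext i; simp only [Finset.mem_filter, Finset.mem_Icc]; omega
    rw [e1, e2, e3, Nat.card_Icc, Nat.card_Icc, Nat.card_Icc,
      ← add_mul, ← add_mul, ← Nat.cast_add, ← Nat.cast_add]
    have hcnt : (k - 1 + 1 - (t + 1)) + (min t (ℓ - k + 1) + 1 - max 1 (t + 2 - k))
        + (t + 1 - (ℓ - k + 2)) = k - 1 := by omega
    rw [hcnt, Nat.cast_sub hk, Nat.cast_one]
  -- identity for m : total multiplicity of each m i is k
  have hmm : (k : ℝ) * ∑ i ∈ Icc 1 ℓ, m i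
      = (∑ j ∈ Icc 1 (k - 1), ∑ t ∈ Icc 1 j, m t)
        + (∑ i ∈ Icc 1 (ℓ - k + 1), ∑ t ∈ Icc i (i + k - 1), m t)
        + (∑ i ∈ Icc (ℓ - k + 2) ℓ, ∑ t ∈ Icc i ℓ, m t) := by
    rw [swap_sum_aux ℓ m (Icc 1 (k - 1)) (fun j => Icc 1 j)
        (fun j hj => by
          rw [Finset.mem_Icc] at hj
          exact Finset.Icc_subset_Icc le_rfl (by omega)),
      swap_sum_aux ℓ m (Icc 1 (ℓ - k + 1)) (fun i => Icc i (i + k - 1))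
        (fun i hi => by
          rw [Finset.mem_Icc] at hi
          exact Finset.Icc_subset_Icc (by omega) (by omega)),
      swap_sum_aux ℓ m (Icc (ℓ - k + 2) ℓ) (fun i => Icc i ℓ)
        (fun i hi => by
          rw [Finset.mem_Icc] at hi
          exact Finset.Icc_subset_Icc (by omega) le_rfl),
      ← Finset.sum_add_distrib, ← Finset.sum_add_distrib, Finset.mul_sum]
    refine Finset.sum_congr rfl fun t ht => ?_
    rw [Finset.mem_Icc] at ht
    have e1 : (Icc 1 (k - 1)).filter (fun j => t ∈ Icc 1 j)
        = Icc t (k - 1) := by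
      ext j; simp only [Finset.mem_filter, Finset.mem_Icc]; omega
    have e2 : (Icc 1 (ℓ - k + 1)).filter (fun i => t ∈ Icc i (i + k - 1))
        = Icc (max 1 (t + 1 - k)) (min t (ℓ - k + 1)) := by
      ext i; simp only [Finset.mem_filter, Finset.mem_Icc]; omega
    have e3 : (Icc (ℓ - k + 2) ℓ).filter (fun i => t ∈ Icc i ℓ)
        = Icc (ℓ - k + 2) t := by
      ext i; simp only [Finset.mem_filter, Finset.mem_Icc]; omega
    rw [e1, e2, e3, Nat.card_Icc, Nat.card_Icc, Nat.card_Icc,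
      ← add_mul, ← add_mul, ← Nat.cast_add, ← Nat.cast_add]
    have hcnt : (k - 1 + 1 - t) + (min t (ℓ - k + 1) + 1 - max 1 (t + 1 - k))
        + (t + 1 - (ℓ - k + 2)) = k := by omega
    rw [hcnt]
  rw [ho, hmm]
  refine add_le_add (add_le_add ?_ ?_) ?_
  · exact Finset.sum_le_sum fun j hj => by
      rw [Finset.mem_Icc] at hj; exact ha j hj.1 (by omega)
  · exact Finset.sum_le_sum fun i hi => by
      rw [Finset.mem_Icc] at hi; exact hb i hi.1 hi.2
  · exact Finset.sum_le_sum fun i hi => by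
      rw [Finset.mem_Icc] at hi; exact hc i hi.1 hi.2
end

section
/- Let G = (V,E) be a finite simple undirected graph with nonnegative edge weights w, let v ∈ V be a vertex of degree 1 whose unique incident edge is e = {u,v} with w(e) = 0, and let M be a matching in G with e ∉ M that covers neither u nor v. Let M' = M ∪ {e}, which is again a matching. Then for every integer k ≥ 1: if there exists a weight-augmenting k-path with respect to M', then there also exists a weight-augmenting k-path with respect to M. (Indeed, any weight-augmenting k-path for M' either avoids e and is itself a weight-augmenting k-path for M, or contains e and becomes one after deleting e.) -/
/-- `M` is a matching in the simple graph `G`: a set of edges of `G` that are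
pairwise vertex-disjoint. -/
def EdgeMatching {V : Type*} [DecidableEq V] (G : SimpleGraph V)
    (M : Finset (Sym2 V)) : Prop :=
  (∀ e ∈ M, e ∈ G.edgeSet) ∧
    ∀ e ∈ M, ∀ f ∈ M, e ≠ f → ∀ v : V, ¬(v ∈ e ∧ v ∈ f)

/-- The weight of a finite set of edges. -/
noncomputable def wsum {V : Type*} (w : Sym2 V → ℝ) (F : Finset (Sym2 V)) : ℝ :=
  ∑ e ∈ F, w e

/-- `p` is an alternating path with respect to the matching `M`: a cycle-free path
such that of any two consecutive edges, exactly one belongs to `M`. -/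
def IsAltPath {V : Type*} [DecidableEq V] {G : SimpleGraph V}
    (M : Finset (Sym2 V)) {u v : V} (p : G.Walk u v) : Prop :=
  p.IsPath ∧ ∀ (i : ℕ) (h : i + 1 < p.edges.length),
    ((p.edges[i]'(Nat.lt_of_succ_lt h)) ∈ M ↔ (p.edges[i+1]'h) ∉ M)

/-- `p` is a weight-augmenting `k`-path with respect to `M`: an alternating path with
exactly `k` edges outside `M` whose edges outside `M` weigh more than its edges in `M`. -/
def IsWeightAugKPath {V : Type*} [DecidableEq V] {G : SimpleGraph V}
    (w : Sym2 V → ℝ) (M : Finset (Sym2 V)) (k : ℕ) {u v : V} (p : G.Walk u v) : Prop :=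
  IsAltPath M p ∧ (p.edges.filter (fun e => e ∉ M)).length = k ∧
    ((p.edges.filter (fun e => e ∈ M)).map w).sum <
      ((p.edges.filter (fun e => e ∉ M)).map w).sum

/-- `M` is a maximum weight matching of `G`. -/
def IsMaxWeightMatching {V : Type*} [DecidableEq V] (G : SimpleGraph V)
    (w : Sym2 V → ℝ) (M : Finset (Sym2 V)) : Prop :=
  EdgeMatching G M ∧ ∀ M' : Finset (Sym2 V), EdgeMatching G M' → wsum w M' ≤ wsum w M

/-- Reversal preserves weight-augmenting `k`-paths. -/
lemma IsWeightAugKPath_reverse {V : Type*} [DecidableEq V] {G : SimpleGraph V}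
    (w : Sym2 V → ℝ) (M : Finset (Sym2 V)) (k : ℕ) {a b : V} (p : G.Walk a b)
    (h : IsWeightAugKPath w M k p) : IsWeightAugKPath w M k p.reverse := by
  obtain ⟨⟨hp, halt⟩, hk, hsum⟩ := h
  refine ⟨⟨hp.reverse, ?_⟩, ?_, ?_⟩
  · intro i hi
    simp only [SimpleGraph.Walk.edges_reverse] at hi ⊢
    have hn : i + 1 < p.edges.length := by simpa using hi
    simp only [List.getElem_reverse]
    have h2 : p.edges.length - 1 - i = (p.edges.length - 1 - (i+1)) + 1 := by omega
    have := halt (p.edges.length - 1 - (i+1)) (by omega)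
    simp only [h2]
    tauto
  · rw [SimpleGraph.Walk.edges_reverse, List.filter_reverse, List.length_reverse, hk]
  · rw [SimpleGraph.Walk.edges_reverse, List.filter_reverse, List.filter_reverse,
      List.map_reverse, List.map_reverse, List.sum_reverse, List.sum_reverse]
    exact hsum

/-- If `v` has unique neighbor `u` and a path contains the edge `s(u,v)`,
then `v` is an endpoint of the path. -/
lemma pendant_endpoint {V : Type*} [DecidableEq V] {G : SimpleGraph V}
    {u v : V} (hdeg : ∀ x, G.Adj v x → x = u) :
    ∀ {a b : V} (p : G.Walk a b), p.IsPath → s(u,v) ∈ p.edges → v = a ∨ v = b := by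
  intro a b p
  induction p with
  | nil => simp
  | @cons a c b h q ih =>
    intro hp he
    rw [SimpleGraph.Walk.edges_cons, List.mem_cons] at he
    have hq : q.IsPath ∧ a ∉ q.support := by
      rw [SimpleGraph.Walk.cons_isPath_iff] at hp; exact hp
    rcases he with he | he
    · rcases Sym2.eq_iff.mp he with ⟨h1, h2⟩ | ⟨h1, h2⟩
      · right
        cases q with
        | nil => exact h2
        | @cons c x b h' q' =>
          exfalso
          have hx : x = u := hdeg x (h2 ▸ h')
          apply hq.2
          rw [SimpleGraph.Walk.support_cons]
          exact List.mem_cons_of_mem _ (h1 ▸ hx ▸ q'.start_mem_support)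
      · exact Or.inl h2
    · rcases ih hq.1 he with hvc | hvb
      · exfalso
        have hau : a = u := hdeg a (hvc ▸ h.symm)
        have hnd := hp.edges_nodup
        rw [SimpleGraph.Walk.edges_cons] at hnd
        have hne : s(a, c) ∉ q.edges := (List.nodup_cons.mp hnd).1
        exact hne (by rw [hau]; exact hvc ▸ he)
      · exact Or.inr hvb

/-- A weight-augmenting `k`-path for `insert e M` avoiding `e` is one for `M`. -/
lemma IsWeightAugKPath_of_not_mem {V : Type*} [DecidableEq V] {G : SimpleGraph V}
    (w : Sym2 V → ℝ) (M : Finset (Sym2 V)) (e : Sym2 V) (k : ℕ) {a b : V} (p : G.Walk a b)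
    (he : e ∉ p.edges)
    (h : IsWeightAugKPath w (insert e M) k p) : IsWeightAugKPath w M k p := by
  obtain ⟨⟨hp, halt⟩, hk, hsum⟩ := h
  have hmem : ∀ f ∈ p.edges, (f ∈ insert e M ↔ f ∈ M) := by
    intro f hf
    have hfe : f ≠ e := fun hfe => he (hfe ▸ hf)
    simp [Finset.mem_insert, hfe]
  have hfilt1 : p.edges.filter (fun f => f ∉ insert e M) = p.edges.filter (fun f => f ∉ M) :=
    List.filter_congr (fun f hf => by simp [hmem f hf])
  have hfilt2 : p.edges.filter (fun f => f ∈ insert e M) = p.edges.filter (fun f => f ∈ M) :=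
    List.filter_congr (fun f hf => by simp [hmem f hf])
  refine ⟨⟨hp, ?_⟩, ?_, ?_⟩
  · intro i hi
    have h1 := hmem _ (List.getElem_mem (Nat.lt_of_succ_lt hi))
    have h2 := hmem _ (List.getElem_mem hi)
    rw [← h1, ← h2]
    exact halt i hi
  · rw [← hfilt1]; exact hk
  · rw [← hfilt1, ← hfilt2]; exact hsum

/-- Dropping the pendant first edge of a weight-augmenting path. -/
lemma drop_head_aug {V : Type*} [DecidableEq V] {G : SimpleGraph V}
    (w : Sym2 V → ℝ) {u v : V} (hdeg : ∀ x, G.Adj v x → x = u)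
    (hwe : w s(u,v) = 0)
    (M : Finset (Sym2 V)) (k : ℕ) {b : V} (p : G.Walk v b)
    (h : IsWeightAugKPath w (insert s(u,v) M) k p) :
    ∃ (a' b' : V) (q : G.Walk a' b'), IsWeightAugKPath w M k q := by
  obtain ⟨⟨hp, halt⟩, hkk, hsum⟩ := h
  cases p with
  | nil =>
      refine ⟨v, v, SimpleGraph.Walk.nil, ⟨⟨SimpleGraph.Walk.IsPath.nil, ?_⟩, ?_, ?_⟩⟩ <;>
        simp_all [SimpleGraph.Walk.edges_nil]
  | @cons v c b hadj q =>
    have hcu : c = u := hdeg c hadj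
    have hedge : s(v, c) = s(u, v) := by rw [hcu, Sym2.eq_swap]
    have hqpath : q.IsPath ∧ v ∉ q.support := by
      rw [SimpleGraph.Walk.cons_isPath_iff] at hp; exact hp
    have hnd := hp.edges_nodup
    rw [SimpleGraph.Walk.edges_cons] at hnd
    have henq : s(u,v) ∉ q.edges := by
      have := (List.nodup_cons.mp hnd).1
      rwa [hedge] at this
    have hmem : ∀ f ∈ q.edges, (f ∈ insert s(u,v) M ↔ f ∈ M) := by
      intro f hf
      have hfe : f ≠ s(u,v) := fun hfe => henq (hfe ▸ hf)
      simp [Finset.mem_insert, hfe]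
    have hself : s(u,v) ∈ insert s(u,v) M := Finset.mem_insert_self _ _
    simp only [SimpleGraph.Walk.edges_cons, hedge, List.filter_cons, hself,
      not_true_eq_false] at hkk hsum
    norm_num at hkk hsum
    have hne : ∀ f ∈ q.edges, f ≠ s(u,v) := fun f hf hfe => henq (hfe ▸ hf)
    have hf1 : List.filter (fun e => !decide (e = s(u,v)) && !decide (e ∈ M)) q.edges
        = List.filter (fun f => decide (f ∉ M)) q.edges :=
      List.filter_congr (fun f hf => by simp [hne f hf])
    have hf2 : List.filter (fun e => decide (e = s(u,v)) || decide (e ∈ M)) q.edges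
        = List.filter (fun f => decide (f ∈ M)) q.edges :=
      List.filter_congr (fun f hf => by simp [hne f hf])
    rw [hf1] at hkk
    rw [hf1, hf2, hwe, zero_add] at hsum
    refine ⟨c, b, q, ⟨⟨hqpath.1, ?_⟩, ?_, ?_⟩⟩
    · intro i hi
      have hlen : (i+1) + 1 < (SimpleGraph.Walk.cons hadj q).edges.length := by
        rw [SimpleGraph.Walk.edges_cons]; simpa using Nat.succ_lt_succ hi
      have := halt (i+1) hlen
      simp only [SimpleGraph.Walk.edges_cons, List.getElem_cons_succ] at this
      have h1 := hmem _ (List.getElem_mem (Nat.lt_of_succ_lt hi))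
      have h2 := hmem _ (List.getElem_mem hi)
      rw [← h1, ← h2]
      exact this
    · exact hkk
    · exact hsum

/-- Let `v` be a vertex of degree 1 whose unique incident edge is `e = {u,v}` of
weight `0`, and let `M` be a matching avoiding `e` and covering neither `u` nor `v`.
Then `M' = M ∪ {e}` is again a matching, and for every `k ≥ 1`, any weight-augmenting
`k`-path with respect to `M'` yields a weight-augmenting `k`-path with respect to `M`. -/
theorem zero_weight_pendant_edge_aug_path {V : Type*} [Fintype V] [DecidableEq V]
    (G : SimpleGraph V) (w : Sym2 V → ℝ) (hw : ∀ e ∈ G.edgeSet, 0 ≤ w e)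
    (u v : V) (hadj : G.Adj u v) (hdeg : ∀ x : V, G.Adj v x → x = u)
    (hwe : w s(u, v) = 0)
    (M : Finset (Sym2 V)) (hM : EdgeMatching G M)
    (heM : s(u, v) ∉ M)
    (hfree : ∀ f ∈ M, u ∉ f ∧ v ∉ f) :
    EdgeMatching G (insert s(u, v) M) ∧
      ∀ k : ℕ, 1 ≤ k →
        (∃ (a b : V) (p : G.Walk a b), IsWeightAugKPath w (insert s(u, v) M) k p) →
        ∃ (a b : V) (p : G.Walk a b), IsWeightAugKPath w M k p := by
  constructor
  · constructor
    · intro f hf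
      rcases Finset.mem_insert.mp hf with rfl | hf
      · exact hadj
      · exact hM.1 f hf
    · intro f hf g hg hfg x hx
      rcases Finset.mem_insert.mp hf with hf | hf
      · rcases Finset.mem_insert.mp hg with hg | hg
        · exact hfg (hf.trans hg.symm)
        · have hx1 : x ∈ s(u,v) := hf ▸ hx.1
          rcases Sym2.mem_iff.mp hx1 with h1 | h1
          · exact (hfree g hg).1 (by subst h1; exact hx.2)
          · exact (hfree g hg).2 (by subst h1; exact hx.2)
      · rcases Finset.mem_insert.mp hg with hg | hg
        · have hx2 : x ∈ s(u,v) := hg ▸ hx.2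
          rcases Sym2.mem_iff.mp hx2 with h1 | h1
          · exact (hfree f hf).1 (by subst h1; exact hx.1)
          · exact (hfree f hf).2 (by subst h1; exact hx.1)
        · exact hM.2 f hf g hg hfg x hx
  · rintro k hk ⟨a, b, p, hp⟩
    by_cases he : s(u,v) ∈ p.edges
    · rcases pendant_endpoint hdeg p hp.1.1 he with hva | hvb
      · subst hva
        exact drop_head_aug w hdeg hwe M k p hp
      · subst hvb
        exact drop_head_aug w hdeg hwe M k p.reverse
          (IsWeightAugKPath_reverse w _ k p hp)
    · exact ⟨a, b, p, IsWeightAugKPath_of_not_mem w M _ k p he hp⟩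
end

section
/- Let G = (V,E) be a finite simple undirected graph with positive integer edge weights w satisfying L ≤ w(e) ≤ N for all e ∈ E, where L ≥ 1 and N are integers, let ε > 0, and let α ≥ 1. For each integer i with ⌊log_{1+ε} L⌋ ≤ i ≤ ⌊log_{1+ε} N⌋, let E_i = { e ∈ E : w(e) ≥ (1+ε)^i } and let M_i ⊆ E_i be a matching such that α·|M_i| ≥ ν(E_i), where ν(E_i) is the maximum cardinality of a matching contained in E_i. Let M be a matching in G together with a level assignment lvl : M → ℤ such that every f ∈ M satisfies ⌊log_{1+ε} L⌋ ≤ lvl(f) ≤ ⌊log_{1+ε} N⌋ and f ∈ M_{lvl(f)}, and such that for every level i and every edge e ∈ M_i, either e ∈ M or e shares an endpoint with some f ∈ M with lvl(f) ≥ i (this holds for the matching produced by taking all edges of the matching at the highest level and then adding matching edges from lower levels in descending level order whenever they are not adjacent to an already added edge). Then for every matching M* of G, 2α(1+ε)·w(M) ≥ w(M*); that is, M is a 2α(1+ε)-approximate maximum weight matching. -/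
lemma sym2_filter_card_le {V : Type*} [Fintype V] [DecidableEq V] (f : Sym2 V) :
    (Finset.univ.filter (fun v => v ∈ f)).card ≤ 2 := by
  induction f using Sym2.ind with
  | _ a b =>
    have hsub : (Finset.univ.filter (fun v => v ∈ s(a, b))) ⊆ {a, b} := by
      intro v hv
      simp only [Finset.mem_filter, Sym2.mem_iff] at hv
      simp [hv.2]
    calc (Finset.univ.filter (fun v => v ∈ s(a, b))).card ≤ ({a, b} : Finset V).card :=
          Finset.card_le_card hsub
      _ ≤ ({b} : Finset V).card + 1 := Finset.card_insert_le a {b}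
      _ = 2 := by simp

lemma tele_sum (b : ℝ) (lo : ℤ) : ∀ j : ℤ, lo ≤ j →
    ∑ i ∈ Finset.Icc (lo+1) j, (b ^ i - b ^ (i-1)) = b ^ j - b ^ lo := by
  intro j
  refine Int.le_induction (motive := fun j _ => ∑ i ∈ Finset.Icc (lo+1) j, (b ^ i - b ^ (i-1)) = b ^ j - b ^ lo) ?_ ?_ j
  · simp
  · intro j hj ih
    have hins : Finset.Icc (lo+1) (j+1) = insert (j+1) (Finset.Icc (lo+1) j) := by
      ext x; simp only [Finset.mem_Icc, Finset.mem_insert]; omega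
    rw [hins, Finset.sum_insert (by simp [Finset.mem_Icc]), ih]
    have hj1 : j + 1 - 1 = j := by ring
    rw [hj1]; ring

/-- Stubbs–Williams meta-theorem (static quality guarantee): with integer edge weights
in `[L, N]`, levels `i` from `⌊log_{1+ε} L⌋` to `⌊log_{1+ε} N⌋`, level edge sets
`E_i = {e ∈ E : w e ≥ (1+ε)^i}` and `α`-approximate maximum cardinality matchings
`M_i ⊆ E_i`, any matching `M` obtained by greedily merging the `M_i` from the top
level downwards is a `2α(1+ε)`-approximate maximum weight matching. -/
theorem level_merge_approx {V : Type*} [Fintype V] [DecidableEq V]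
    (G : SimpleGraph V) (w : Sym2 V → ℤ) (L N : ℤ) (hL : 1 ≤ L)
    (hw : ∀ e ∈ G.edgeSet, L ≤ w e ∧ w e ≤ N)
    (ε α : ℝ) (hε : 0 < ε) (hα : 1 ≤ α)
    (lo hi : ℤ) (hlo : lo = ⌊Real.logb (1 + ε) (L : ℝ)⌋)
    (hhi : hi = ⌊Real.logb (1 + ε) (N : ℝ)⌋)
    (Ei : ℤ → Finset (Sym2 V))
    (hEi : ∀ i : ℤ, lo ≤ i → i ≤ hi →
      ∀ e : Sym2 V, e ∈ Ei i ↔ e ∈ G.edgeSet ∧ (1 + ε) ^ i ≤ (w e : ℝ))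
    (Mi : ℤ → Finset (Sym2 V))
    (hMiSub : ∀ i : ℤ, lo ≤ i → i ≤ hi → Mi i ⊆ Ei i)
    (hMiMatch : ∀ i : ℤ, lo ≤ i → i ≤ hi → EdgeMatching G (Mi i))
    (hMiApprox : ∀ i : ℤ, lo ≤ i → i ≤ hi →
      ∀ M' : Finset (Sym2 V), EdgeMatching G M' → M' ⊆ Ei i →
        (M'.card : ℝ) ≤ α * (Mi i).card)
    (M : Finset (Sym2 V)) (hM : EdgeMatching G M)
    (lvl : Sym2 V → ℤ)
    (hlvl : ∀ f ∈ M, lo ≤ lvl f ∧ lvl f ≤ hi ∧ f ∈ Mi (lvl f))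
    (hgreedy : ∀ i : ℤ, lo ≤ i → i ≤ hi → ∀ e ∈ Mi i,
      e ∈ M ∨ ∃ f ∈ M, i ≤ lvl f ∧ ∃ x : V, x ∈ e ∧ x ∈ f)
    (Mstar : Finset (Sym2 V)) (hMstar : EdgeMatching G Mstar) :
    (∑ e ∈ Mstar, (w e : ℝ)) ≤ 2 * α * (1 + ε) * ∑ e ∈ M, (w e : ℝ) := by
    classical
  have hb1 : (1:ℝ) < 1 + ε := by linarith
  have hb0 : (0:ℝ) < 1 + ε := by linarith
  have hα0 : (0:ℝ) ≤ α := by linarith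
  set b : ℝ := 1 + ε with hbdef
  have hwpos : ∀ e ∈ G.edgeSet, (0:ℝ) < (w e : ℝ) := by
    intro e he
    have h1 := (hw e he).1
    have h2 : (0:ℤ) < w e := by omega
    exact_mod_cast h2
  set lev : Sym2 V → ℤ := fun e => ⌊Real.logb b (w e)⌋ with hlevdef
  have hle_lev : ∀ e ∈ G.edgeSet, ∀ i : ℤ, (b ^ i ≤ (w e:ℝ) ↔ i ≤ lev e) := by
    intro e he i
    simp only [hlevdef]
    rw [Int.le_floor, Real.le_logb_iff_rpow_le hb1 (hwpos e he), Real.rpow_intCast]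
  have hlev_lt : ∀ e ∈ G.edgeSet, (w e : ℝ) < b ^ (lev e + 1) := by
    intro e he
    have h2 : Real.logb b (w e) < ((lev e + 1 : ℤ) : ℝ) := by
      push_cast
      exact Int.lt_floor_add_one (Real.logb b (w e))
    have h3 := (Real.logb_lt_iff_lt_rpow hb1 (hwpos e he)).mp h2
    rwa [Real.rpow_intCast] at h3
  have hLpos : (0:ℝ) < (L:ℝ) := by exact_mod_cast (by omega : (0:ℤ) < L)
  have hlev_mem : ∀ e ∈ G.edgeSet, lo ≤ lev e ∧ lev e ≤ hi := by
    intro e he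
    constructor
    · rw [hlo]; simp only [hlevdef]
      exact Int.floor_mono (Real.logb_le_logb_of_le hb1 hLpos (by exact_mod_cast (hw e he).1))
    · rw [hhi]; simp only [hlevdef]
      exact Int.floor_mono (Real.logb_le_logb_of_le hb1 (hwpos e he) (by exact_mod_cast (hw e he).2))
  -- layered sum decomposition
  have layer : ∀ S : Finset (Sym2 V), (∀ e ∈ S, e ∈ G.edgeSet) →
      ∑ e ∈ S, b ^ (lev e)
        = (S.card : ℝ) * b ^ lo
          + ∑ i ∈ Finset.Icc (lo+1) hi,
              (b ^ i - b ^ (i-1)) * ((S.filter (fun e => i ≤ lev e)).card : ℝ) := by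
    intro S hS
    have h1 : ∀ e ∈ S, b ^ (lev e)
        = b ^ lo + ∑ i ∈ Finset.Icc (lo+1) hi,
            (if i ≤ lev e then b ^ i - b ^ (i-1) else 0) := by
      intro e he
      have hbnd := hlev_mem e (hS e he)
      have hflt : Finset.Icc (lo+1) (lev e)
          = (Finset.Icc (lo+1) hi).filter (fun i => i ≤ lev e) := by
        ext x
        simp only [Finset.mem_Icc, Finset.mem_filter]
        omega
      rw [← Finset.sum_filter, ← hflt, tele_sum b lo (lev e) hbnd.1]
      ring
    calc ∑ e ∈ S, b ^ (lev e)
        = ∑ e ∈ S, (b ^ lo + ∑ i ∈ Finset.Icc (lo+1) hi,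
            (if i ≤ lev e then b ^ i - b ^ (i-1) else 0)) := Finset.sum_congr rfl h1
      _ = (S.card : ℝ) * b ^ lo + ∑ e ∈ S, ∑ i ∈ Finset.Icc (lo+1) hi,
            (if i ≤ lev e then b ^ i - b ^ (i-1) else 0) := by
          rw [Finset.sum_add_distrib, Finset.sum_const, nsmul_eq_mul]
      _ = (S.card : ℝ) * b ^ lo + ∑ i ∈ Finset.Icc (lo+1) hi, ∑ e ∈ S,
            (if i ≤ lev e then b ^ i - b ^ (i-1) else 0) := by
          rw [Finset.sum_comm]
      _ = (S.card : ℝ) * b ^ lo + ∑ i ∈ Finset.Icc (lo+1) hi,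
            (b ^ i - b ^ (i-1)) * ((S.filter (fun e => i ≤ lev e)).card : ℝ) := by
          congr 1
          refine Finset.sum_congr rfl (fun i _ => ?_)
          rw [← Finset.sum_filter, Finset.sum_const, nsmul_eq_mul, mul_comm]
  -- |Mi i| ≤ 2 |{f ∈ M : i ≤ lev f}|
  have hMiF : ∀ i : ℤ, lo ≤ i → i ≤ hi →
      ((Mi i).card : ℝ) ≤ 2 * ((M.filter (fun f => i ≤ lev f)).card : ℝ) := by
    intro i hilo hihi
    set F := M.filter (fun f => i ≤ lev f) with hF
    set T : Finset V := F.biUnion (fun f => Finset.univ.filter (fun v => v ∈ f)) with hT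
    have hTcard : T.card ≤ 2 * F.card := by
      calc T.card ≤ ∑ f ∈ F, (Finset.univ.filter (fun v => v ∈ f)).card :=
            Finset.card_biUnion_le
        _ ≤ ∑ _f ∈ F, 2 := Finset.sum_le_sum (fun f _ => sym2_filter_card_le f)
        _ = 2 * F.card := by rw [Finset.sum_const, smul_eq_mul, mul_comm]
    have hex : ∀ e ∈ Mi i, ∃ x : V, x ∈ e ∧ x ∈ T := by
      intro e he
      have heE := hMiSub i hilo hihi he
      have heG : e ∈ G.edgeSet := ((hEi i hilo hihi e).mp heE).1
      have hwe : b ^ i ≤ (w e : ℝ) := ((hEi i hilo hihi e).mp heE).2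
      rcases hgreedy i hilo hihi e he with heM | ⟨f, hfM, hlf, x, hxe, hxf⟩
      · refine ⟨e.out.1, Sym2.out_fst_mem e, ?_⟩
        rw [hT]
        apply Finset.mem_biUnion.mpr
        refine ⟨e, ?_, by simp [Sym2.out_fst_mem]⟩
        rw [hF, Finset.mem_filter]
        exact ⟨heM, (hle_lev e heG i).mp hwe⟩
      · refine ⟨x, hxe, ?_⟩
        rw [hT]
        apply Finset.mem_biUnion.mpr
        refine ⟨f, ?_, by simp [hxf]⟩
        rw [hF, Finset.mem_filter]
        obtain ⟨hflo, hfhi, hfMi⟩ := hlvl f hfM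
        have hfE := hMiSub (lvl f) hflo hfhi hfMi
        have hfG : f ∈ G.edgeSet := ((hEi _ hflo hfhi f).mp hfE).1
        have hwf : b ^ (lvl f) ≤ (w f : ℝ) := ((hEi _ hflo hfhi f).mp hfE).2
        have hwf2 : b ^ i ≤ (w f : ℝ) :=
          le_trans (zpow_le_zpow_right₀ hb1.le hlf) hwf
        exact ⟨hfM, (hle_lev f hfG i).mp hwf2⟩
    have hmain : (Mi i).card ≤ T.card := by
      set φ : Sym2 V → V := fun e =>
        if h : ∃ x : V, x ∈ e ∧ x ∈ T then h.choose else e.out.1 with hφ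
      have hφmem : ∀ e ∈ Mi i, φ e ∈ e ∧ φ e ∈ T := by
        intro e he
        have h := hex e he
        simp only [hφ, dif_pos h]
        exact h.choose_spec
      apply Finset.card_le_card_of_injOn φ (fun e he => (hφmem e he).2)
      intro e1 h1 e2 h2 heq
      by_contra hne
      exact (hMiMatch i hilo hihi).2 e1 (Finset.mem_coe.mp h1) e2 (Finset.mem_coe.mp h2) hne
        (φ e1) ⟨(hφmem e1 (Finset.mem_coe.mp h1)).1, heq ▸ (hφmem e2 (Finset.mem_coe.mp h2)).1⟩
    have := le_trans hmain hTcard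
    exact_mod_cast this
  -- counting inequalities
  have hcount : ∀ i : ℤ, lo ≤ i → i ≤ hi →
      ((Mstar.filter (fun e => i ≤ lev e)).card : ℝ)
        ≤ 2 * α * ((M.filter (fun e => i ≤ lev e)).card : ℝ) := by
    intro i hilo hihi
    have hsub : Mstar.filter (fun e => i ≤ lev e) ⊆ Ei i := by
      intro e he
      rw [Finset.mem_filter] at he
      have heG := hMstar.1 e he.1
      exact (hEi i hilo hihi e).mpr ⟨heG, (hle_lev e heG i).mpr he.2⟩
    have hmatch : EdgeMatching G (Mstar.filter (fun e => i ≤ lev e)) := by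
      constructor
      · intro e he; exact hMstar.1 e (Finset.mem_filter.mp he).1
      · intro e he f hf
        exact hMstar.2 e (Finset.mem_filter.mp he).1 f (Finset.mem_filter.mp hf).1
    have h1 := hMiApprox i hilo hihi _ hmatch hsub
    have h2 := hMiF i hilo hihi
    calc ((Mstar.filter (fun e => i ≤ lev e)).card : ℝ) ≤ α * (Mi i).card := h1
      _ ≤ α * (2 * ((M.filter (fun e => i ≤ lev e)).card : ℝ)) :=
          mul_le_mul_of_nonneg_left h2 hα0
      _ = 2 * α * ((M.filter (fun e => i ≤ lev e)).card : ℝ) := by ring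
  have hMG : ∀ e ∈ M, e ∈ G.edgeSet := hM.1
  have hMsG : ∀ e ∈ Mstar, e ∈ G.edgeSet := hMstar.1
  by_cases hMs : Mstar = ∅
  · subst hMs
    simp only [Finset.sum_empty]
    apply mul_nonneg (by positivity)
    exact Finset.sum_nonneg (fun e he => (hwpos e (hMG e he)).le)
  · obtain ⟨e0, he0⟩ := Finset.nonempty_iff_ne_empty.mpr hMs
    have hlohi : lo ≤ hi :=
      le_trans (hlev_mem e0 (hMsG e0 he0)).1 (hlev_mem e0 (hMsG e0 he0)).2
    have key : ∑ e ∈ Mstar, b ^ (lev e) ≤ 2 * α * ∑ e ∈ M, b ^ (lev e) := by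
      rw [layer Mstar hMsG, layer M hMG, mul_add]
      have hfilMs : Mstar.filter (fun e => lo ≤ lev e) = Mstar :=
        Finset.filter_true_of_mem (fun e he => (hlev_mem e (hMsG e he)).1)
      have hfilM : M.filter (fun e => lo ≤ lev e) = M :=
        Finset.filter_true_of_mem (fun e he => (hlev_mem e (hMG e he)).1)
      have hbase : (Mstar.card : ℝ) * b ^ lo ≤ 2 * α * ((M.card : ℝ) * b ^ lo) := by
        have hc := hcount lo le_rfl hlohi
        rw [hfilMs, hfilM] at hc
        have hblo : (0:ℝ) < b ^ lo := zpow_pos hb0 lo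
        calc (Mstar.card : ℝ) * b ^ lo ≤ (2 * α * (M.card : ℝ)) * b ^ lo :=
              mul_le_mul_of_nonneg_right hc hblo.le
          _ = 2 * α * ((M.card : ℝ) * b ^ lo) := by ring
      refine add_le_add hbase ?_
      rw [Finset.mul_sum]
      apply Finset.sum_le_sum
      intro i hi'
      rw [Finset.mem_Icc] at hi'
      have hd : (0:ℝ) ≤ b ^ i - b ^ (i-1) :=
        sub_nonneg.mpr (zpow_le_zpow_right₀ hb1.le (by omega))
      have hc := hcount i (by omega) hi'.2
      calc (b ^ i - b ^ (i-1)) * ((Mstar.filter (fun e => i ≤ lev e)).card : ℝ)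
          ≤ (b ^ i - b ^ (i-1)) * (2 * α * ((M.filter (fun e => i ≤ lev e)).card : ℝ)) :=
            mul_le_mul_of_nonneg_left hc hd
        _ = 2 * α * ((b ^ i - b ^ (i-1)) * ((M.filter (fun e => i ≤ lev e)).card : ℝ)) := by
            ring
    calc ∑ e ∈ Mstar, (w e : ℝ)
        ≤ ∑ e ∈ Mstar, b ^ (lev e + 1) :=
          Finset.sum_le_sum (fun e he => (hlev_lt e (hMsG e he)).le)
      _ = b * ∑ e ∈ Mstar, b ^ (lev e) := by
          rw [Finset.mul_sum]
          refine Finset.sum_congr rfl (fun e _ => ?_)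
          rw [zpow_add_one₀ (ne_of_gt hb0)]
          ring
      _ ≤ b * (2 * α * ∑ e ∈ M, b ^ (lev e)) := mul_le_mul_of_nonneg_left key hb0.le
      _ ≤ b * (2 * α * ∑ e ∈ M, (w e : ℝ)) := by
          apply mul_le_mul_of_nonneg_left _ hb0.le
          apply mul_le_mul_of_nonneg_left _ (by positivity)
          exact Finset.sum_le_sum (fun e he => (hle_lev e (hMG e he) (lev e)).mpr le_rfl)
      _ = 2 * α * (1 + ε) * ∑ e ∈ M, (w e : ℝ) := by rw [hbdef]; ring
end
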